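/- arXiv:2307.02337 — 2 statements merged into one kernel-verified Lean document; each statement's English description precedes it below -/
import Mathlib

section
/- Let ℓ : ℝ^{d×m} → ℝ be twice continuously differentiable, let λ ≠ 0 be a real number, and define the reparameterized loss ℓ'(V) := ℓ(λ⁻¹ V). Define the relative flatness measure of a loss g at W by κ_g(W) = Σ_{s,s'=1}^d ⟨W_s, W_{s'}⟩ · Σ_{t=1}^m ∂²g(W)/∂w_{s,t}∂w_{s',t}, where W_s is the s-th row of W. Then the relative flatness measure is invariant under this reparameterization: κ_{ℓ'}(λW) = κ_ℓ(W) for all W ∈ ℝ^{d×m}. -/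
open scoped BigOperators

lemma fderiv_comp_smul_aux {E F : Type*} [NormedAddCommGroup E] [NormedSpace ℝ E]
    [NormedAddCommGroup F] [NormedSpace ℝ F] (f : E → F) (hf : Differentiable ℝ f)
    (c : ℝ) (V : E) :
    fderiv ℝ (fun x => f (c • x)) V = c • fderiv ℝ f (c • V) := by
  have hg : fderiv ℝ (fun x : E => c • x) V = c • (ContinuousLinearMap.id ℝ E) := by
    have : (fun x : E => c • x) = fun x : E => c • (id x) := rfl
    rw [this, fderiv_fun_const_smul differentiable_id.differentiableAt c, fderiv_id]
  have := fderiv_comp V (hf (c • V)) ((differentiable_id.const_smul c).differentiableAt (x := V))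
  have heq : (fun x => f (c • x)) = f ∘ (fun x : E => c • x) := rfl
  rw [heq, this, hg]
  ext x
  simp

/-- Second partial derivative of `f : ℝ^{d×m} → ℝ` with respect to the entries
`(s,t)` (outer) and `(s',t')` (inner) of the weight matrix. -/
noncomputable def pderiv2 {d m : ℕ} (f : (Fin d → Fin m → ℝ) → ℝ)
    (W : Fin d → Fin m → ℝ) (s : Fin d) (t : Fin m) (s' : Fin d) (t' : Fin m) : ℝ :=
  fderiv ℝ (fun V => fderiv ℝ f V (Pi.single s' (Pi.single t' 1))) W
    (Pi.single s (Pi.single t 1))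

/-- The relative flatness measure of a loss `g : ℝ^{d×m} → ℝ` at a weight matrix `W`:
`κ_g(W) = Σ_{s,s'} ⟨W_s, W_{s'}⟩ · Σ_t ∂²g(W)/∂w_{s,t}∂w_{s',t}`. -/
noncomputable def kappa {d m : ℕ} (g : (Fin d → Fin m → ℝ) → ℝ)
    (W : Fin d → Fin m → ℝ) : ℝ :=
  ∑ s, ∑ s', (∑ t, W s t * W s' t) * (∑ t, pderiv2 g W s t s' t)

lemma pderiv2_reparam {d m : ℕ} (ℓ : (Fin d → Fin m → ℝ) → ℝ)
    (hℓ : ContDiff ℝ 2 ℓ) (lam : ℝ) (hlam : lam ≠ 0)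
    (W : Fin d → Fin m → ℝ) (s : Fin d) (t : Fin m) (s' : Fin d) (t' : Fin m) :
    pderiv2 (fun V => ℓ (lam⁻¹ • V)) (lam • W) s t s' t'
      = lam⁻¹ * lam⁻¹ * pderiv2 ℓ W s t s' t' := by
  have hdiff : Differentiable ℝ ℓ := hℓ.differentiable two_ne_zero
  have hF : Differentiable ℝ (fderiv ℝ ℓ) :=
    (hℓ.fderiv_right (m := 1) (le_refl 2)).differentiable one_ne_zero
  set e : Fin d → Fin m → ℝ := Pi.single s' (Pi.single t' 1) with he
  set e₂ : Fin d → Fin m → ℝ := Pi.single s (Pi.single t 1) with he₂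
  have hG : Differentiable ℝ (fun U => fderiv ℝ ℓ U e) :=
    hF.clm_apply (differentiable_const e)
  have hstep1 : (fun V => fderiv ℝ (fun V => ℓ (lam⁻¹ • V)) V e)
      = fun V => lam⁻¹ * (fderiv ℝ ℓ (lam⁻¹ • V) e) := by
    funext V
    rw [fderiv_comp_smul_aux ℓ hdiff lam⁻¹ V]
    simp
  unfold pderiv2
  rw [hstep1]
  have hG2 : DifferentiableAt ℝ (fun V : Fin d → Fin m → ℝ =>
      fderiv ℝ ℓ (lam⁻¹ • V) e) (lam • W) := by
    exact ((hG.comp (differentiable_id.const_smul lam⁻¹)).differentiableAt)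
  rw [fderiv_const_mul hG2 lam⁻¹]
  rw [fderiv_comp_smul_aux (fun U => fderiv ℝ ℓ U e) hG lam⁻¹ (lam • W)]
  have hW : lam⁻¹ • lam • W = W := by
    rw [smul_smul, inv_mul_cancel₀ hlam, one_smul]
  rw [hW]
  simp [mul_assoc]
  exact Or.inl rfl

/-- the relative flatness measure is invariant under the layer-wise
reparameterization `W ↦ λW`, `ℓ ↦ ℓ'` with `ℓ'(V) := ℓ(λ⁻¹ V)` for `λ ≠ 0`:
`κ_{ℓ'}(λW) = κ_ℓ(W)`. -/
theorem statement8 {d m : ℕ} (ℓ : (Fin d → Fin m → ℝ) → ℝ)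
    (hℓ : ContDiff ℝ 2 ℓ) (lam : ℝ) (hlam : lam ≠ 0)
    (ℓ' : (Fin d → Fin m → ℝ) → ℝ) (hℓ' : ∀ V, ℓ' V = ℓ (lam⁻¹ • V)) :
    ∀ W : Fin d → Fin m → ℝ, kappa ℓ' (lam • W) = kappa ℓ W := by
  intro W
  have hfun : ℓ' = fun V => ℓ (lam⁻¹ • V) := funext hℓ'
  unfold kappa
  refine Finset.sum_congr rfl fun s _ => Finset.sum_congr rfl fun s' _ => ?_
  have h1 : ∑ t, (lam • W) s t * (lam • W) s' t = (lam * lam) * ∑ t, W s t * W s' t := by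
    rw [Finset.mul_sum]
    refine Finset.sum_congr rfl fun t _ => ?_
    simp [Pi.smul_apply, smul_eq_mul]; ring
  have h2 : ∑ t, pderiv2 ℓ' (lam • W) s t s' t
      = (lam⁻¹ * lam⁻¹) * ∑ t, pderiv2 ℓ W s t s' t := by
    rw [Finset.mul_sum]
    refine Finset.sum_congr rfl fun t _ => ?_
    rw [hfun, pderiv2_reparam ℓ hℓ lam hlam]
  rw [h1, h2]
  field_simp
end

section
/- Let ℓ : ℝ^{d×m} → ℝ be twice continuously differentiable, let λ ≠ 0 be a real number, and define the reparameterized loss ℓ'(V) := ℓ(λ⁻¹ V). Define the simplified relative flatness measure of a loss g at W by κ̂_g(W) = ‖W‖² · Σ_{s=1}^d Σ_{t=1}^m ∂²g(W)/∂w_{s,t}², where ‖W‖² is the squared Frobenius norm of W and the second factor is the trace of the full Hessian of g at W. Then κ̂ is invariant under this reparameterization: κ̂_{ℓ'}(λW) = κ̂_ℓ(W) for all W ∈ ℝ^{d×m}. -/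
open scoped BigOperators

/-- The simplified relative flatness measure of a loss `g : ℝ^{d×m} → ℝ` at `W`:
`κ̂_g(W) = ‖W‖²_F · Tr(H)`, where `‖W‖²_F = Σ_{s,t} W_{s,t}²` is the squared Frobenius
norm and `Tr(H) = Σ_{s,t} ∂²g(W)/∂w_{s,t}²` is the trace of the full Hessian. -/
noncomputable def kappaHat {d m : ℕ} (g : (Fin d → Fin m → ℝ) → ℝ)
    (W : Fin d → Fin m → ℝ) : ℝ :=
  (∑ s, ∑ t, (W s t) ^ 2) * (∑ s, ∑ t, pderiv2 g W s t s t)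

section aux
variable {E : Type*} [NormedAddCommGroup E] [NormedSpace ℝ E]

noncomputable def smulCLM (c : ℝ) : E →L[ℝ] E := c • ContinuousLinearMap.id ℝ E

lemma smulCLM_apply (c : ℝ) (V : E) : smulCLM c V = c • V := rfl

lemma fderiv_smul_comp (f : E → ℝ) (hf : Differentiable ℝ f) (c : ℝ) (V : E) :
    fderiv ℝ (fun V => f (c • V)) V = (fderiv ℝ f (c • V)).comp (smulCLM c) := by
  have h : (fun V => f (c • V)) = f ∘ (smulCLM c) := rfl
  rw [h, fderiv_comp V (hf _) (smulCLM c).differentiableAt, (smulCLM c).fderiv]; rfl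

end aux

lemma pderiv2_scale {d m : ℕ} (ℓ : (Fin d → Fin m → ℝ) → ℝ)
    (hℓ : ContDiff ℝ 2 ℓ) (lam : ℝ) (hlam : lam ≠ 0)
    (ℓ' : (Fin d → Fin m → ℝ) → ℝ) (hℓ' : ∀ V, ℓ' V = ℓ (lam⁻¹ • V))
    (W : Fin d → Fin m → ℝ) (s : Fin d) (t : Fin m) (s' : Fin d) (t' : Fin m) :
    pderiv2 ℓ' (lam • W) s t s' t' = lam⁻¹ ^ 2 * pderiv2 ℓ W s t s' t' := by
  set e : Fin d → Fin m → ℝ := Pi.single s (Pi.single t 1) with he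
  set e' : Fin d → Fin m → ℝ := Pi.single s' (Pi.single t' 1) with he'
  have hdiff : Differentiable ℝ ℓ := hℓ.differentiable (by norm_num)
  have h1 : ContDiff ℝ 1 (fderiv ℝ ℓ) := hℓ.fderiv_right (by norm_num)
  have hF : Differentiable ℝ (fun V => fderiv ℝ ℓ V e') :=
    (h1.differentiable (by norm_num)).clm_apply (differentiable_const _)
  have hℓ'' : ℓ' = fun V => ℓ (lam⁻¹ • V) := funext hℓ'
  have hG : (fun V => fderiv ℝ ℓ' V e')
      = fun V => lam⁻¹ * (fun V => fderiv ℝ ℓ V e') (lam⁻¹ • V) := by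
    funext V
    rw [hℓ'', fderiv_smul_comp ℓ hdiff lam⁻¹ V]
    simp [smulCLM_apply, smul_eq_mul]
  have hFcomp : Differentiable ℝ (fun V => (fun V => fderiv ℝ ℓ V e') (lam⁻¹ • V)) :=
    hF.comp (differentiable_id.const_smul lam⁻¹)
  have hcancel : lam⁻¹ • (lam • W) = W := by
    rw [smul_smul, inv_mul_cancel₀ hlam, one_smul]
  unfold pderiv2
  rw [hG, fderiv_const_mul (hFcomp (lam • W)) lam⁻¹,
    fderiv_smul_comp _ hF lam⁻¹ (lam • W), hcancel]
  simp [smulCLM_apply, smul_eq_mul]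
  ring

/-- the simplified relative flatness measure is invariant under the
layer-wise reparameterization `W ↦ λW`, `ℓ ↦ ℓ'` with `ℓ'(V) := ℓ(λ⁻¹ V)` for `λ ≠ 0`:
`κ̂_{ℓ'}(λW) = κ̂_ℓ(W)`. -/
theorem statement9 {d m : ℕ} (ℓ : (Fin d → Fin m → ℝ) → ℝ)
    (hℓ : ContDiff ℝ 2 ℓ) (lam : ℝ) (hlam : lam ≠ 0)
    (ℓ' : (Fin d → Fin m → ℝ) → ℝ) (hℓ' : ∀ V, ℓ' V = ℓ (lam⁻¹ • V)) :
    ∀ W : Fin d → Fin m → ℝ, kappaHat ℓ' (lam • W) = kappaHat ℓ W := by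
  intro W
  unfold kappaHat
  have h1 : (∑ s, ∑ t, ((lam • W) s t) ^ 2) = lam ^ 2 * ∑ s, ∑ t, (W s t) ^ 2 := by
    simp [Finset.mul_sum, mul_pow, smul_eq_mul]
  have h2 : (∑ s, ∑ t, pderiv2 ℓ' (lam • W) s t s t)
      = lam⁻¹ ^ 2 * ∑ s, ∑ t, pderiv2 ℓ W s t s t := by
    simp only [pderiv2_scale ℓ hℓ lam hlam ℓ' hℓ' W, Finset.mul_sum]
  rw [h1, h2]
  field_simp
end
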